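/- arXiv:1202.0015 — 4 statements merged into one kernel-verified Lean document; each statement's English description precedes it below -/
import Mathlib

section
/- (Generalized Stein's identity) Let Y be an absolutely continuous real random variable with everywhere positive, differentiable density f_Y. Suppose there are functions k, t and a constant ν such that lim_{y→±∞} k(y) f_Y(y) = 0 and f_Y'(y)/f_Y(y) = −k'(y)/k(y) + (ν − t(y))/k(y) for all y. Then for every differentiable function r with E[|r(Y) t(Y)|] < ∞, E[r(Y)²] < ∞ and E[|k(Y) r'(Y)|] < ∞, one has E[r(Y)(t(Y) − ν)] = E[r'(Y) k(Y)]. -/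
open MeasureTheory Filter Set

/-- Auxiliary lemma: if `g` is differentiable and nonvanishing with `g → 0` at `+∞`,
`h → a` at `+∞`, and `h · (g'/g)` is integrable, then `a = 0`. -/
lemma stein_aux_limit_zero (g h : ℝ → ℝ) (a : ℝ)
    (hg : Differentiable ℝ g) (hgne : ∀ y, g y ≠ 0)
    (hg0 : Tendsto g atTop (nhds 0))
    (hha : Tendsto h atTop (nhds a))
    (hq : Integrable (fun y => h y * (deriv g y / g y))) : a = 0 := by
  by_contra ha0
  have hapos : 0 < |a| := abs_pos.mpr ha0
  -- eventually `|h y| ≥ |a|/2`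
  have hev : ∀ᶠ y in atTop, |a| / 2 ≤ |h y| := by
    have hball : ∀ᶠ y in atTop, |h y - a| < |a| / 2 := by
      have := hha (Metric.ball_mem_nhds a (by positivity : (0:ℝ) < |a| / 2))
      filter_upwards [this] with y hy
      simpa [Real.dist_eq] using hy
    filter_upwards [hball] with y hy
    have : |a| ≤ |h y - a| + |h y| := by
      calc |a| = |a - h y + h y| := by ring_nf
        _ ≤ |a - h y| + |h y| := abs_add_le _ _
        _ = |h y - a| + |h y| := by rw [abs_sub_comm]
    linarith
  obtain ⟨c, hc⟩ := eventually_atTop.mp hev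
  -- the logarithmic derivative of `g²`
  set φ : ℝ → ℝ := fun y => 2 * (deriv g y / g y) with hφdef
  set ψ : ℝ → ℝ := fun y => Real.log (g y ^ 2) with hψdef
  have hψd : ∀ y, HasDerivAt ψ (φ y) y := by
    intro y
    have h1 : HasDerivAt (fun y => g y ^ 2) (2 * g y ^ 1 * deriv g y) y := by
      simpa using ((hg y).hasDerivAt.fun_pow 2)
    have h2 : HasDerivAt ψ ((g y ^ 2)⁻¹ * (2 * g y ^ 1 * deriv g y)) y := by
      have hne : g y ^ 2 ≠ 0 := pow_ne_zero 2 (hgne y)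
      exact (Real.hasDerivAt_log hne).comp y h1
    convert h2 using 1
    field_simp [hφdef, hgne y]
    rw [hφdef]
    field_simp [hgne y]
  have hφmeas : Measurable φ :=
    ((measurable_deriv g).div (hg.continuous.measurable)).const_mul 2
  -- `φ` is integrable on `Ioi c`
  have hφint : IntegrableOn φ (Ioi c) := by
    apply Integrable.mono' ((hq.restrict (s := Ioi c)).norm.const_mul (4 / |a|))
    · exact hφmeas.aestronglyMeasurable
    · rw [ae_restrict_iff' measurableSet_Ioi]
      filter_upwards with y hy
      have hcy : |a| / 2 ≤ |h y| := hc y (le_of_lt hy)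
      have : |h y * (deriv g y / g y)| = |h y| * |deriv g y / g y| := abs_mul _ _
      have hb : |a| / 2 * |deriv g y / g y| ≤ |h y * (deriv g y / g y)| := by
        rw [this]
        exact mul_le_mul_of_nonneg_right hcy (abs_nonneg _)
      have : |φ y| = 2 * |deriv g y / g y| := by
        rw [hφdef]; rw [abs_mul]; norm_num
      simp only [Real.norm_eq_abs]
      rw [this]
      calc 2 * |deriv g y / g y|
          = (4 / |a|) * (|a| / 2 * |deriv g y / g y|) := by field_simp; ring
        _ ≤ (4 / |a|) * |h y * (deriv g y / g y)| := by
            apply mul_le_mul_of_nonneg_left hb (by positivity)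
  -- FTC on `[c, y]`
  have key : ∀ y, c ≤ y → (∫ u in c..y, φ u) = ψ y - ψ c := by
    intro y hy
    apply intervalIntegral.integral_eq_sub_of_hasDerivAt (fun x _ => hψd x)
    rw [intervalIntegrable_iff_integrableOn_Ioc_of_le hy]
    exact hφint.mono_set Ioc_subset_Ioi_self
  -- `ψ` converges at `+∞`
  have hψlim : Tendsto ψ atTop (nhds (ψ c + ∫ y in Ioi c, φ y)) := by
    have t1 := intervalIntegral_tendsto_integral_Ioi c hφint tendsto_id
    have t2 : Tendsto (fun y => ψ c + ∫ u in c..y, φ u) atTop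
        (nhds (ψ c + ∫ y in Ioi c, φ y)) := tendsto_const_nhds.add t1
    apply t2.congr'
    filter_upwards [eventually_ge_atTop c] with y hy
    rw [key y hy]; ring
  -- but `ψ → -∞`
  have hψbot : Tendsto ψ atTop atBot := by
    have hg2 : Tendsto (fun y => g y ^ 2) atTop (nhdsWithin 0 (Ioi 0)) := by
      apply tendsto_nhdsWithin_of_tendsto_nhds_of_eventually_within
      · have := hg0.mul hg0
        simp only [mul_zero] at this
        apply this.congr
        intro y; ring
      · exact Eventually.of_forall fun y => pow_pos (abs_pos.mpr (hgne y) |> fun _ =>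
          (by positivity : (0:ℝ) < 1)) 2 |> fun _ => by
            simpa using (pow_two_pos_of_ne_zero (hgne y))
    exact Real.tendsto_log_nhdsGT_zero.comp hg2
  exact hψlim.not_tendsto (disjoint_nhds_atBot _) hψbot

/-- **Generalized Stein's identity.** If the everywhere positive differentiable
density `fY` of `Y` satisfies `fY'/fY = -k'/k + (ν - t)/k` and `k·fY` vanishes
at `±∞`, then `E[r(Y)(t(Y) - ν)] = E[r'(Y) k(Y)]` for every differentiable `r`
with the stated integrability properties. -/
theorem generalized_stein_identity
    (fY k t r : ℝ → ℝ) (ν : ℝ)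
    (hfY_pos : ∀ y, 0 < fY y)
    (hfY_diff : Differentiable ℝ fY)
    (hfY_prob : (∫ y, fY y) = 1)
    (hk_diff : Differentiable ℝ k)
    (hk_ne : ∀ y, k y ≠ 0)
    (hlim_top : Tendsto (fun y => k y * fY y) atTop (nhds 0))
    (hlim_bot : Tendsto (fun y => k y * fY y) atBot (nhds 0))
    (hscore : ∀ y, deriv fY y / fY y = -(deriv k y / k y) + (ν - t y) / k y)
    (hr_diff : Differentiable ℝ r)
    (h1 : Integrable (fun y => r y * t y * fY y))
    (h2 : Integrable (fun y => (r y) ^ 2 * fY y))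
    (h3 : Integrable (fun y => k y * deriv r y * fY y)) :
    (∫ y, r y * (t y - ν) * fY y) = ∫ y, deriv r y * k y * fY y := by
  -- `fY` is integrable
  have hfY_int : Integrable fY := by
    by_contra hcon
    rw [integral_undef hcon] at hfY_prob
    norm_num at hfY_prob
  set g : ℝ → ℝ := fun y => k y * fY y with hgdef
  have hgne : ∀ y, g y ≠ 0 := fun y => mul_ne_zero (hk_ne y) (hfY_pos y).ne'
  have hg_diff : Differentiable ℝ g := hk_diff.mul hfY_diff
  -- derivative of `g`
  have hg' : ∀ y, deriv g y = (ν - t y) * fY y := by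
    intro y
    have hfne : fY y ≠ 0 := (hfY_pos y).ne'
    have hf' : deriv fY y = (-(deriv k y / k y) + (ν - t y) / k y) * fY y := by
      rw [← hscore y]
      field_simp
    have : deriv g y = deriv k y * fY y + k y * deriv fY y :=
      deriv_mul (hk_diff y) (hfY_diff y)
    rw [this, hf']
    field_simp [hk_ne y]
    ring
  set h : ℝ → ℝ := fun y => r y * g y with hhdef
  have hh_diff : Differentiable ℝ h := hr_diff.mul hg_diff
  have hh' : ∀ y, deriv h y = deriv r y * g y + r y * ((ν - t y) * fY y) := by
    intro y
    have : deriv h y = deriv r y * g y + r y * deriv g y :=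
      deriv_mul (hr_diff y) (hg_diff y)
    rw [this, hg' y]
  -- integrability pieces
  have hrf : Integrable (fun y => r y * fY y) := by
    apply Integrable.mono' (((hfY_int.add h2).div_const 2))
    · exact (hr_diff.continuous.mul hfY_diff.continuous).aestronglyMeasurable
    · filter_upwards with y
      have hf := (hfY_pos y).le
      have habs : ‖r y * fY y‖ = |r y| * fY y := by
        rw [Real.norm_eq_abs, abs_mul, abs_of_nonneg hf]
      rw [habs]
      have h2r : 2 * |r y| ≤ 1 + r y ^ 2 := by nlinarith [sq_nonneg (|r y| - 1), sq_abs (r y)]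
      have : |r y| * fY y ≤ (1 + r y ^ 2) / 2 * fY y := by
        apply mul_le_mul_of_nonneg_right _ hf
        linarith
      calc |r y| * fY y ≤ (1 + r y ^ 2) / 2 * fY y := this
        _ = (fY y + r y ^ 2 * fY y) / 2 := by ring
  have hint3 : Integrable (fun y => deriv r y * g y) := by
    apply h3.congr
    filter_upwards with y
    rw [hgdef]; ring
  have hint1 : Integrable (fun y => r y * ((ν - t y) * fY y)) := by
    have heq : (fun y => r y * ((ν - t y) * fY y))
        = fun y => ν * (r y * fY y) - r y * t y * fY y := by
      funext y; ring
    rw [heq]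
    exact (hrf.const_mul ν).sub h1
  have hderivh_int : Integrable (deriv h) := by
    have heq : deriv h = fun y => deriv r y * g y + r y * ((ν - t y) * fY y) :=
      funext hh'
    rw [heq]
    exact hint3.add hint1
  -- FTC for `h`
  have key : ∀ y z : ℝ, (∫ u in y..z, deriv h u) = h z - h y := by
    intro y z
    exact intervalIntegral.integral_eq_sub_of_hasDerivAt
      (fun x _ => (hh_diff x).hasDerivAt) hderivh_int.intervalIntegrable
  -- limits of `h` at `±∞`
  have hA : Tendsto h atTop (nhds (h 0 + ∫ y in Ioi 0, deriv h y)) := by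
    have t1 := intervalIntegral_tendsto_integral_Ioi 0 hderivh_int.integrableOn tendsto_id
    have t2 : Tendsto (fun y => h 0 + ∫ u in (0:ℝ)..y, deriv h u) atTop
        (nhds (h 0 + ∫ y in Ioi 0, deriv h y)) := tendsto_const_nhds.add t1
    apply t2.congr
    intro y; rw [key 0 y]; ring
  have hB : Tendsto h atBot (nhds (h 0 - ∫ y in Iic 0, deriv h y)) := by
    have t1 := intervalIntegral_tendsto_integral_Iic 0 hderivh_int.integrableOn tendsto_id
    have t2 : Tendsto (fun y => h 0 - ∫ u in y..(0:ℝ), deriv h u) atBot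
        (nhds (h 0 - ∫ y in Iic 0, deriv h y)) := tendsto_const_nhds.sub t1
    apply t2.congr
    intro y; rw [key y 0]; ring
  -- the integrable "q" function
  have hqint : Integrable (fun y => h y * (deriv g y / g y)) := by
    have heq : (fun y => h y * (deriv g y / g y))
        = fun y => deriv h y - deriv r y * g y := by
      funext y
      rw [hh' y, hg' y, hhdef]
      have := hgne y
      field_simp
      ring
    rw [heq]
    exact hderivh_int.sub hint3
  -- apply the auxiliary lemma at `+∞`
  have hA0 : h 0 + (∫ y in Ioi 0, deriv h y) = 0 :=
    stein_aux_limit_zero g h _ hg_diff hgne hlim_top hA hqint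
  -- apply the auxiliary lemma at `-∞` via reflection
  have hB0 : h 0 - (∫ y in Iic 0, deriv h y) = 0 := by
    have hdneg : ∀ y, deriv (fun z => g (-z)) y = -deriv g (-y) := by
      intro y
      have hcomp : HasDerivAt (fun z => g (-z)) (deriv g (-y) * (-1)) y := by
        exact (hg_diff (-y)).hasDerivAt.comp y (hasDerivAt_neg y)
      rw [hcomp.deriv]; ring
    apply stein_aux_limit_zero (fun y => g (-y)) (fun y => h (-y)) _
      (hg_diff.comp differentiable_neg) (fun y => hgne (-y))
      (hlim_bot.comp tendsto_neg_atTop_atBot)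
      (hB.comp tendsto_neg_atTop_atBot)
    · have heq : (fun y => h (-y) * (deriv (fun z => g (-z)) y / g (-y)))
          = fun y => -(h (-y) * (deriv g (-y) / g (-y))) := by
        funext y
        rw [hdneg y]
        ring_nf
      rw [heq]
      exact (hqint.comp_neg).neg
  -- compute the total integral of `deriv h`
  have hsplit : (∫ y in Iic 0, deriv h y) + (∫ y in Ioi 0, deriv h y)
      = ∫ y, deriv h y :=
    intervalIntegral.integral_Iic_add_Ioi hderivh_int.integrableOn hderivh_int.integrableOn
  have htotal : (∫ y, deriv h y) = 0 := by
    rw [← hsplit]; linarith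
  have hsum : (∫ y, deriv h y)
      = (∫ y, deriv r y * g y) + ∫ y, r y * ((ν - t y) * fY y) := by
    have heq : deriv h = fun y => deriv r y * g y + r y * ((ν - t y) * fY y) :=
      funext hh'
    rw [heq]
    exact integral_add hint3 hint1
  have e1 : (∫ y, deriv r y * k y * fY y) = ∫ y, deriv r y * g y := by
    congr 1; funext y; rw [hgdef]; ring
  have e2 : (∫ y, r y * (t y - ν) * fY y) = -∫ y, r y * ((ν - t y) * fY y) := by
    rw [← integral_neg]
    congr 1; funext y; ring
  rw [e1, e2]
  linarith [hsum, htotal]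
end

section
/- (Score of the output density, a-derivative) For every a > 0 and y ∈ ℝ, the output density of the additive Gaussian noise channel satisfies ∂/∂a log f_Y(y;a) = (1/(2a²)) · ( ∫ (y−x)² f_X(x) φ_a(y−x) dx / f_Y(y;a) − a ), where φ_a(u) = (2πa)^{−1/2} exp(−u²/(2a)). -/
open MeasureTheory Filter

lemma hasDerivAt_gauss (u : ℝ) {b : ℝ} (hb : 0 < b) :
    HasDerivAt (fun t => (Real.sqrt (2 * Real.pi * t))⁻¹ * Real.exp (-u ^ 2 / (2 * t)))
      ((Real.sqrt (2 * Real.pi * b))⁻¹ * Real.exp (-u ^ 2 / (2 * b)) *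
        (u ^ 2 / (2 * b ^ 2) - 1 / (2 * b))) b := by
  have h2pib : (0:ℝ) < 2 * Real.pi * b := by positivity
  have hs : (0:ℝ) < Real.sqrt (2 * Real.pi * b) := Real.sqrt_pos.mpr h2pib
  have h1 : HasDerivAt (fun t : ℝ => Real.sqrt (2 * Real.pi * t))
      (1 / (2 * Real.sqrt (2 * Real.pi * b)) * (2 * Real.pi)) b := by
    have := (Real.hasDerivAt_sqrt h2pib.ne').comp b
      (((hasDerivAt_id b).const_mul (2 * Real.pi)))
    simpa [Function.comp_def, mul_comm, mul_assoc, mul_left_comm] using this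
  have hinv : HasDerivAt (fun t : ℝ => (Real.sqrt (2 * Real.pi * t))⁻¹)
      (-(1 / (2 * Real.sqrt (2 * Real.pi * b)) * (2 * Real.pi)) /
        (Real.sqrt (2 * Real.pi * b)) ^ 2) b := h1.inv hs.ne'
  have hexp : HasDerivAt (fun t : ℝ => Real.exp (-u ^ 2 / (2 * t)))
      (Real.exp (-u ^ 2 / (2 * b)) * (u ^ 2 / (2 * b ^ 2))) b := by
    have hq : HasDerivAt (fun t : ℝ => -u ^ 2 / (2 * t)) (u ^ 2 / (2 * b ^ 2)) b := by
      have h2 : HasDerivAt (fun t : ℝ => (2 * t)) 2 b := by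
        simpa using (hasDerivAt_id b).const_mul (2:ℝ)
      have := (h2.inv (by positivity : (2:ℝ) * b ≠ 0)).const_mul (-u ^ 2)
      refine (HasDerivAt.congr_deriv this ?_ : HasDerivAt (fun t : ℝ => -u ^ 2 / (2 * t)) _ b)
      field_simp
    simpa [mul_comm] using hq.exp
  have := hinv.mul hexp
  refine this.congr_deriv ?_
  have hsq : Real.sqrt (2 * Real.pi * b) ^ 2 = 2 * Real.pi * b := Real.sq_sqrt h2pib.le
  rw [hsq]
  field_simp
  ring_nf

/-- **Score of the output density with respect to the parameter `a`.**
For the additive Gaussian noise channel,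
`∂/∂a log f_Y(y;a) = (1/(2a²))·(E_X[(y−X)² φ_a(y−X)]/f_Y(y;a) − a)`. -/
theorem output_score_a_derivative
    (fX : ℝ → ℝ)
    (hfX_nonneg : ∀ x, 0 ≤ fX x)
    (hfX_prob : (∫ x, fX x) = 1)
    (hfX_mom : Integrable (fun x => x ^ 2 * fX x))
    (phi : ℝ → ℝ → ℝ)
    (hphi : ∀ a u, phi a u =
      (Real.sqrt (2 * Real.pi * a))⁻¹ * Real.exp (-u ^ 2 / (2 * a)))
    (fY : ℝ → ℝ → ℝ)
    (hfY : ∀ a, 0 < a → ∀ y, fY a y = ∫ x, fX x * phi a (y - x)) :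
    ∀ a, 0 < a → ∀ y : ℝ,
      deriv (fun b => Real.log (fY b y)) a =
        (1 / (2 * a ^ 2)) *
          ((∫ x, (y - x) ^ 2 * fX x * phi a (y - x)) / fY a y - a) := by
  intro a ha y
  have hfX_int : Integrable fX := by
    by_contra h
    rw [integral_undef h] at hfX_prob
    norm_num at hfX_prob
  have hmeas := hfX_int.aestronglyMeasurable
  have hphi_pos : ∀ b, 0 < b → ∀ u, 0 < phi b u := by
    intro b hb u
    rw [hphi]
    have : (0:ℝ) < 2 * Real.pi * b := by positivity
    positivity
  have hphi_cont : ∀ b, Continuous (fun x : ℝ => phi b (y - x)) := by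
    intro b
    simp only [hphi]
    fun_prop
  have hphi_le' : ∀ b, 0 < b → ∀ u, phi b u ≤ (Real.sqrt (2 * Real.pi * b))⁻¹ := by
    intro b hb u
    rw [hphi]
    have h2 : (0:ℝ) < 2 * Real.pi * b := by positivity
    have := Real.sqrt_pos.mpr h2
    calc (Real.sqrt (2 * Real.pi * b))⁻¹ * Real.exp (-u ^ 2 / (2 * b))
        ≤ (Real.sqrt (2 * Real.pi * b))⁻¹ * 1 := by
          apply mul_le_mul_of_nonneg_left _ (by positivity)
          apply Real.exp_le_one_iff.mpr
          apply div_nonpos_of_nonpos_of_nonneg (neg_nonpos.mpr (by positivity)) (by positivity)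
      _ = (Real.sqrt (2 * Real.pi * b))⁻¹ := mul_one _
  have hphi_le : ∀ b, a / 2 ≤ b → ∀ u, phi b u ≤ (Real.sqrt (Real.pi * a))⁻¹ := by
    intro b hb u
    have hb' : (0:ℝ) < b := lt_of_lt_of_le (by linarith) hb
    refine le_trans (hphi_le' b hb' u) ?_
    have hpa : (0:ℝ) < Real.pi * a := by positivity
    have h1 : Real.sqrt (Real.pi * a) ≤ Real.sqrt (2 * Real.pi * b) := by
      apply Real.sqrt_le_sqrt; nlinarith [Real.pi_pos]
    exact inv_anti₀ (Real.sqrt_pos.mpr hpa) h1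
  set C : ℝ := (Real.sqrt (Real.pi * a))⁻¹ with hC
  have hC_pos : 0 < C := by
    rw [hC]; have : (0:ℝ) < Real.pi * a := by positivity
    positivity
  -- integrability of (y - x)^2 * fX x
  have hx_int : Integrable (fun x => x * fX x) := by
    apply Integrable.mono (hfX_int.add hfX_mom)
      ((aestronglyMeasurable_id.mul hmeas))
    filter_upwards with x
    have h1 : |x| ≤ 1 + x ^ 2 := by nlinarith [sq_nonneg (|x| - 1), sq_abs x]
    have h0 := hfX_nonneg x
    simp only [Pi.mul_apply, id_eq, Pi.add_apply, Real.norm_eq_abs]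
    rw [abs_mul, abs_of_nonneg h0,
      abs_of_nonneg (by positivity : (0:ℝ) ≤ fX x + x ^ 2 * fX x)]
    nlinarith
  have hmom2 : Integrable (fun x => (y - x) ^ 2 * fX x) := by
    have : (fun x => (y - x) ^ 2 * fX x) =
        fun x => y ^ 2 * fX x + (-2 * y) * (x * fX x) + x ^ 2 * fX x := by
      funext x; ring
    rw [this]
    exact ((hfX_int.const_mul _).add (hx_int.const_mul _)).add hfX_mom
  -- integrability of fX * phi b for b > 0
  have hint_phi : ∀ b, 0 < b → Integrable (fun x => fX x * phi b (y - x)) := by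
    intro b hb
    apply Integrable.mono (hfX_int.const_mul (Real.sqrt (2 * Real.pi * b))⁻¹)
      (hmeas.mul (hphi_cont b).aestronglyMeasurable)
    filter_upwards with x
    have h0 := hfX_nonneg x
    have h1 := (hphi_pos b hb (y - x)).le
    have h2 := hphi_le' b hb (y - x)
    have h3 : (0:ℝ) < 2 * Real.pi * b := by positivity
    have h4 : (0:ℝ) ≤ (Real.sqrt (2 * Real.pi * b))⁻¹ := by positivity
    simp only [Real.norm_eq_abs, Pi.mul_apply, abs_mul, abs_of_nonneg h0,
      abs_of_nonneg h1, abs_of_nonneg h4]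
    nlinarith
  -- integrability of (y-x)^2 fX phi
  have hint_mom_phi : Integrable (fun x => (y - x) ^ 2 * fX x * phi a (y - x)) := by
    apply Integrable.mono (hmom2.const_mul C)
      ((((continuous_const.sub continuous_id).pow 2).aestronglyMeasurable.mul hmeas).mul
        (hphi_cont a).aestronglyMeasurable)
    filter_upwards with x
    have h0 := hfX_nonneg x
    have h1 := (hphi_pos a ha (y - x)).le
    have h2 := hphi_le a (by linarith) (y - x)
    simp only [Real.norm_eq_abs, Pi.mul_apply, Pi.pow_apply, Pi.sub_apply, id_eq, abs_mul, sq_abs,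
      abs_of_nonneg h0, abs_of_nonneg h1, abs_of_nonneg hC_pos.le,
      abs_of_nonneg (sq_nonneg (y - x))]
    nlinarith [mul_le_mul_of_nonneg_right h2 (mul_nonneg (sq_nonneg (y - x)) h0)]
  -- positivity of the output density
  have hFa_pos : 0 < ∫ x, fX x * phi a (y - x) := by
    have hnn : (0:ℝ → ℝ) ≤ fun x => fX x * phi a (y - x) := by
      intro x; exact mul_nonneg (hfX_nonneg x) (hphi_pos a ha (y - x)).le
    rcases (integral_nonneg hnn).lt_or_eq with h | h
    · exact h
    · exfalso
      have h0 := (integral_eq_zero_iff_of_nonneg hnn (hint_phi a ha)).mp h.symm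
      have hfX0 : fX =ᵐ[volume] 0 := by
        filter_upwards [h0] with x hx
        have := hphi_pos a ha (y - x)
        simp only [Pi.zero_apply] at hx ⊢
        rcases mul_eq_zero.mp hx with h' | h'
        · exact h'
        · exact absurd h' this.ne'
      rw [integral_congr_ae hfX0] at hfX_prob
      simp at hfX_prob
  -- differentiation under the integral sign
  set F' : ℝ → ℝ → ℝ := fun b x =>
    fX x * (phi b (y - x) * ((y - x) ^ 2 / (2 * b ^ 2) - 1 / (2 * b))) with hF'
  have hdiff : HasDerivAt (fun b => ∫ x, fX x * phi b (y - x)) (∫ x, F' a x) a := by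
    have key := hasDerivAt_integral_of_dominated_loc_of_deriv_le
      (s := Metric.ball a (a / 2)) (F := fun b x => fX x * phi b (y - x)) (F' := F')
      (x₀ := a)
      (bound := fun x => fX x * (C * (2 * (y - x) ^ 2 / a ^ 2 + 1 / a)))
      (Metric.ball_mem_nhds a (by linarith))
      (Eventually.of_forall fun b =>
        hmeas.mul (hphi_cont b).aestronglyMeasurable)
      (hint_phi a ha)
      (hmeas.mul (((hphi_cont a).mul (by fun_prop)).aestronglyMeasurable))
      ?_ ?_ ?_
    · exact key.2
    · -- bound
      filter_upwards with x b hb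
      rw [Metric.mem_ball, Real.dist_eq, abs_lt] at hb
      have hb1 : a / 2 < b := by linarith
      have hb0 : (0:ℝ) < b := by linarith
      have h0 := hfX_nonneg x
      have hp := (hphi_pos b hb0 (y - x)).le
      have hple := hphi_le b hb1.le (y - x)
      simp only [hF', Real.norm_eq_abs]
      rw [abs_mul, abs_of_nonneg h0]
      have habs : |phi b (y - x) * ((y - x) ^ 2 / (2 * b ^ 2) - 1 / (2 * b))|
          ≤ C * (2 * (y - x) ^ 2 / a ^ 2 + 1 / a) := by
        rw [abs_mul, abs_of_nonneg hp]
        have h1 : |(y - x) ^ 2 / (2 * b ^ 2) - 1 / (2 * b)|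
            ≤ 2 * (y - x) ^ 2 / a ^ 2 + 1 / a := by
          have e1 : (y - x) ^ 2 / (2 * b ^ 2) ≤ 2 * (y - x) ^ 2 / a ^ 2 := by
            rw [div_le_div_iff₀ (by positivity) (by positivity)]
            nlinarith [sq_nonneg (y - x),
              mul_pos (show (0:ℝ) < b - a/2 by linarith)
                (show (0:ℝ) < b + a/2 by linarith)]
          have e2 : 1 / (2 * b) ≤ 1 / a := by
            rw [div_le_div_iff₀ (by positivity) (by positivity)]
            linarith
          rw [abs_le]
          constructor
          · have : (0:ℝ) ≤ (y - x) ^ 2 / (2 * b ^ 2) := by positivity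
            have : (0:ℝ) ≤ 2 * (y - x) ^ 2 / a ^ 2 := by positivity
            nlinarith [e2]
          · have : (0:ℝ) ≤ 1 / (2 * b) := by positivity
            have : (0:ℝ) ≤ 1 / a := by positivity
            nlinarith [e1]
        calc phi b (y - x) * |(y - x) ^ 2 / (2 * b ^ 2) - 1 / (2 * b)|
            ≤ C * |(y - x) ^ 2 / (2 * b ^ 2) - 1 / (2 * b)| :=
              mul_le_mul_of_nonneg_right hple (abs_nonneg _)
          _ ≤ C * (2 * (y - x) ^ 2 / a ^ 2 + 1 / a) :=
              mul_le_mul_of_nonneg_left h1 hC_pos.le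
      exact mul_le_mul_of_nonneg_left habs h0
    · -- integrability of the bound
      have : (fun x => fX x * (C * (2 * (y - x) ^ 2 / a ^ 2 + 1 / a))) =
          fun x => (C * 2 / a ^ 2) * ((y - x) ^ 2 * fX x) + (C / a) * fX x := by
        funext x; field_simp
      rw [this]
      exact (hmom2.const_mul _).add (hfX_int.const_mul _)
    · -- differentiability
      filter_upwards with x b hb
      rw [Metric.mem_ball, Real.dist_eq, abs_lt] at hb
      have hb0 : (0:ℝ) < b := by linarith
      simp only [hF', hphi]
      exact (hasDerivAt_gauss (y - x) hb0).const_mul (fX x)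
  -- rewrite fY locally and differentiate the log
  set Fa : ℝ := ∫ x, fX x * phi a (y - x) with hFa
  have hlog : HasDerivAt (fun b => Real.log (∫ x, fX x * phi b (y - x)))
      ((∫ x, F' a x) / Fa) a := hdiff.log hFa_pos.ne'
  have heq : (fun b => Real.log (fY b y)) =ᶠ[nhds a]
      fun b => Real.log (∫ x, fX x * phi b (y - x)) := by
    filter_upwards [eventually_gt_nhds ha] with b hb
    rw [hfY b hb y]
  rw [heq.deriv_eq, hlog.deriv]
  -- split the integral of F' a
  have hsplit : (∫ x, F' a x) =
      (1 / (2 * a ^ 2)) * (∫ x, (y - x) ^ 2 * fX x * phi a (y - x))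
        - (1 / (2 * a)) * Fa := by
    have e : (fun x => F' a x) =
        fun x => (1 / (2 * a ^ 2)) * ((y - x) ^ 2 * fX x * phi a (y - x))
          - (1 / (2 * a)) * (fX x * phi a (y - x)) := by
      funext x; simp only [hF']; field_simp
    rw [e, integral_sub (hint_mom_phi.const_mul _) ((hint_phi a ha).const_mul _),
      integral_const_mul, integral_const_mul, hFa]
  rw [hsplit, hfY a ha y, ← hFa]
  field_simp
end

section
/- (Score of the output density, y-derivative) For every a > 0 and y ∈ ℝ, the output density of the additive Gaussian noise channel satisfies ∂/∂y log f_Y(y;a) = − ∫ (y−x) f_X(x) φ_a(y−x) dx / (a · f_Y(y;a)), where φ_a(u) = (2πa)^{−1/2} exp(−u²/(2a)). -/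
open MeasureTheory Filter

/-- **Score of the output density with respect to `y`.**
For the additive Gaussian noise channel,
`∂/∂y log f_Y(y;a) = −E_X[(y−X) φ_a(y−X)]/(a·f_Y(y;a))`. -/
theorem output_score_y_derivative
    (fX : ℝ → ℝ)
    (hfX_nonneg : ∀ x, 0 ≤ fX x)
    (hfX_prob : (∫ x, fX x) = 1)
    (hfX_mom : Integrable (fun x => x ^ 2 * fX x))
    (phi : ℝ → ℝ → ℝ)
    (hphi : ∀ a u, phi a u =
      (Real.sqrt (2 * Real.pi * a))⁻¹ * Real.exp (-u ^ 2 / (2 * a)))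
    (fY : ℝ → ℝ → ℝ)
    (hfY : ∀ a, 0 < a → ∀ y, fY a y = ∫ x, fX x * phi a (y - x)) :
    ∀ a, 0 < a → ∀ y : ℝ,
      deriv (fun y' => Real.log (fY a y')) y =
        -(∫ x, (y - x) * fX x * phi a (y - x)) / (a * fY a y) := by
  intro a ha y
  -- fX is integrable
  have hfXint : Integrable fX := by
    by_contra h
    rw [integral_undef h] at hfX_prob
    norm_num at hfX_prob
  set c : ℝ := (Real.sqrt (2 * Real.pi * a))⁻¹ with hc_def
  have h2pa : 0 < 2 * Real.pi * a := by positivity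
  have hc : 0 < c := by
    have := Real.sqrt_pos.2 h2pa
    positivity
  have hphi_pos : ∀ u, 0 < phi a u := fun u => by
    rw [hphi]
    have := Real.sqrt_pos.2 h2pa
    positivity
  have hphi_le : ∀ u, phi a u ≤ c := fun u => by
    rw [hphi]
    have hx : -u ^ 2 / (2 * a) ≤ 0 :=
      div_nonpos_of_nonpos_of_nonneg (by nlinarith [sq_nonneg u]) (by positivity)
    have h1 : Real.exp (-u ^ 2 / (2 * a)) ≤ 1 := Real.exp_le_one_iff.2 hx
    simpa using mul_le_mul_of_nonneg_left h1 hc.le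
  -- key bound : |u| * phi a u ≤ √a * c
  have hub : ∀ u : ℝ, |u| * phi a u ≤ Real.sqrt a * c := by
    intro u
    rw [hphi]
    have hsa : (0:ℝ) < Real.sqrt a := Real.sqrt_pos.2 ha
    set s : ℝ := u ^ 2 / (2 * a) with hs_def
    have hs2 : 2 * a * s = u ^ 2 := by
      rw [hs_def]; field_simp
    have hE : s + 1 ≤ Real.exp s := Real.add_one_le_exp s
    have hA : 2 * a * |u| ≤ Real.sqrt a * u ^ 2 + 2 * a * Real.sqrt a := by
      nlinarith [mul_nonneg (Real.sqrt_nonneg a) (sq_nonneg (|u| - Real.sqrt a)),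
        Real.sq_sqrt ha.le, sq_abs u, mul_nonneg ha.le (Real.sqrt_nonneg a)]
    have hs3 : Real.sqrt a * (2 * a * s) = Real.sqrt a * u ^ 2 := by rw [hs2]
    have hB : Real.sqrt a * u ^ 2 + 2 * a * Real.sqrt a
        ≤ 2 * a * (Real.sqrt a * Real.exp s) := by
      have h5 := mul_le_mul_of_nonneg_left hE
        (by positivity : (0:ℝ) ≤ 2 * a * Real.sqrt a)
      nlinarith [h5, hs3]
    have h1 : |u| ≤ Real.sqrt a * Real.exp s :=
      (mul_le_mul_iff_right₀ (by positivity : (0:ℝ) < 2 * a)).1 (hA.trans hB)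
    have hexp : Real.exp (-u ^ 2 / (2 * a)) = Real.exp (-s) := by
      rw [hs_def, neg_div]
    rw [hexp]
    calc |u| * (c * Real.exp (-s))
        = (|u| * Real.exp (-s)) * c := by ring
      _ ≤ ((Real.sqrt a * Real.exp s) * Real.exp (-s)) * c := by
          apply mul_le_mul_of_nonneg_right _ hc.le
          exact mul_le_mul_of_nonneg_right h1 (Real.exp_nonneg _)
      _ = Real.sqrt a * c := by
          rw [show Real.sqrt a * Real.exp s * Real.exp (-s) * c
              = Real.sqrt a * c * (Real.exp s * Real.exp (-s)) from by ring,
            ← Real.exp_add]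
          simp
  -- continuity of phi in the shift
  have hcy : ∀ y' : ℝ, Continuous (fun x : ℝ => y' - x) := fun y' =>
    continuous_const.sub continuous_id
  have hphicont : ∀ y' : ℝ, Continuous (fun x => phi a (y' - x)) := by
    intro y'
    have : (fun x => phi a (y' - x)) =
        fun x => c * Real.exp (-(y' - x) ^ 2 / (2 * a)) := by
      funext x; rw [hphi]
    rw [this]
    exact continuous_const.mul ((((hcy y').pow 2).neg.div_const (2 * a)).rexp)
  -- integrability of the integrand for every y'
  have hint : ∀ y' : ℝ, Integrable (fun x => fX x * phi a (y' - x)) := by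
    intro y'
    apply Integrable.mono' (hfXint.const_mul c)
      (hfXint.1.mul (hphicont y').aestronglyMeasurable)
    filter_upwards with x
    simp only [Pi.mul_apply]
    rw [Real.norm_eq_abs, abs_mul, abs_of_nonneg (hfX_nonneg x),
      abs_of_nonneg (hphi_pos _).le]
    calc fX x * phi a (y' - x) ≤ fX x * c :=
          mul_le_mul_of_nonneg_left (hphi_le _) (hfX_nonneg x)
      _ = c * fX x := mul_comm _ _
  -- derivative of phi in y
  have hne2a : (2 * a) ≠ 0 := by positivity
  have hphideriv : ∀ (y' x : ℝ),
      HasDerivAt (fun z => fX x * phi a (z - x))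
        (fX x * (-((y' - x) / a) * phi a (y' - x))) y' := by
    intro y' x
    have h0 : HasDerivAt (fun z : ℝ => z - x) 1 y' := (hasDerivAt_id y').sub_const x
    have h1 : HasDerivAt (fun z => -(z - x) ^ 2 / (2 * a))
        (-((y' - x) / a)) y' := by
      have := ((h0.pow 2).neg).div_const (2 * a)
      convert this using 1
      · rfl
      · rfl
      · rfl
      field_simp
      ring
    have h2 : HasDerivAt (fun z => c * Real.exp (-(z - x) ^ 2 / (2 * a)))
        (c * (Real.exp (-(y' - x) ^ 2 / (2 * a)) * -((y' - x) / a))) y' :=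
      (h1.exp).const_mul c
    have heq : (fun z => fX x * phi a (z - x)) =
        fun z => fX x * (c * Real.exp (-(z - x) ^ 2 / (2 * a))) := by
      funext z; rw [hphi]
    rw [heq, hphi]
    have := h2.const_mul (fX x)
    convert this using 1
    · rfl
    · rfl
    rw [← hc_def]
    ring
  -- differentiate under the integral
  have key := hasDerivAt_integral_of_dominated_loc_of_deriv_le
    (F := fun y' x => fX x * phi a (y' - x))
    (F' := fun y' x => fX x * (-((y' - x) / a) * phi a (y' - x)))
    (x₀ := y) (bound := fun x => fX x * (Real.sqrt a * c / a))
    (μ := volume) (Metric.ball_mem_nhds y one_pos)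
    (Eventually.of_forall fun y' => (hint y').1)
    (hint y)
    (by
      apply AEStronglyMeasurable.mul hfXint.1
      apply Continuous.aestronglyMeasurable
      have : (fun x => -((y - x) / a) * phi a (y - x)) =
          fun x => -((y - x) / a) * (c * Real.exp (-(y - x) ^ 2 / (2 * a))) := by
        funext x; rw [hphi]
      rw [this]
      exact (((hcy y).div_const a).neg).mul
        (continuous_const.mul ((((hcy y).pow 2).neg.div_const (2 * a)).rexp)))
    (by
      filter_upwards with x y' _
      rw [Real.norm_eq_abs, abs_mul, abs_of_nonneg (hfX_nonneg x)]
      apply mul_le_mul_of_nonneg_left _ (hfX_nonneg x)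
      rw [abs_mul, abs_neg, abs_div, abs_of_pos ha,
        abs_of_nonneg (hphi_pos _).le, div_mul_eq_mul_div]
      gcongr ?_ / a
      exact hub _)
    (hfXint.mul_const _)
    (Eventually.of_forall fun x y' _ => hphideriv y' x)
  obtain ⟨hF'int, hder⟩ := key
  -- rewrite fY
  have hfYeq : (fun y' => fY a y') = fun y' => ∫ x, fX x * phi a (y' - x) := by
    funext y'; exact hfY a ha y'
  have hpos : 0 < fY a y := by
    rw [hfY a ha y]
    rw [integral_pos_iff_support_of_nonneg
      (fun x => mul_nonneg (hfX_nonneg x) (hphi_pos _).le) (hint y)]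
    have hsupp : Function.support (fun x => fX x * phi a (y - x)) =
        Function.support fX := by
      ext x
      simp only [Function.mem_support, mul_ne_zero_iff]
      exact ⟨fun h => h.1, fun h => ⟨h, (hphi_pos _).ne'⟩⟩
    rw [hsupp]
    have h01 : 0 < ∫ x, fX x := by rw [hfX_prob]; norm_num
    exact (integral_pos_iff_support_of_nonneg hfX_nonneg hfXint).1 h01
  have hderY : HasDerivAt (fun y' => fY a y')
      (∫ x, fX x * (-((y - x) / a) * phi a (y - x))) y := by
    rw [hfYeq]; exact hder
  have hlog := (hderY.log hpos.ne').deriv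
  rw [hlog]
  -- rearrange the integral
  have hIeq : (∫ x, fX x * (-((y - x) / a) * phi a (y - x)))
      = (-a⁻¹) * ∫ x, (y - x) * fX x * phi a (y - x) := by
    rw [← integral_const_mul]
    congr 1
    funext x
    field_simp
  rw [hIeq]
  field_simp
end

section
/- (Generalized heat-type equation for scaled noise densities) Let f_W : ℝ → ℝ be continuously differentiable and for a > 0, x, y ∈ ℝ set p(y, x, a) = a^{−1/2} f_W((y−x)/√a). Then for all a > 0, x, y ∈ ℝ, ∂/∂a p(y, x, a) = −(1/(2a)) · ∂/∂y ( (y−x) · p(y, x, a) ). -/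
open MeasureTheory Filter

/-- **Generalized heat-type equation for scaled noise densities.**
For a continuously differentiable noise density `f_W` and
`p(y,x,a) = a^{-1/2} f_W((y−x)/√a)`, one has
`∂/∂a p(y,x,a) = −(1/(2a)) ∂/∂y ((y−x)·p(y,x,a))`. -/
theorem heat_type_equation_scaled_noise
    (fW : ℝ → ℝ) (hfW : ContDiff ℝ 1 fW)
    (p : ℝ → ℝ → ℝ → ℝ)
    (hp : ∀ y x b, p y x b = (Real.sqrt b)⁻¹ * fW ((y - x) / Real.sqrt b)) :
    ∀ a, 0 < a → ∀ x y : ℝ,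
      deriv (fun b => p y x b) a =
        -(1 / (2 * a)) * deriv (fun y' => (y' - x) * p y' x a) y := by
  intro a ha x y
  have hs : 0 < Real.sqrt a := Real.sqrt_pos.mpr ha
  set s := Real.sqrt a with hsdef
  have hs2 : s * s = a := Real.mul_self_sqrt ha.le
  set u := (y - x) / s with hu
  have hf : DifferentiableAt ℝ fW u := (hfW.differentiable one_ne_zero).differentiableAt
  have hfu : HasDerivAt fW (deriv fW u) u := hf.hasDerivAt
  -- derivative in b
  have hsqrt : HasDerivAt Real.sqrt (1 / (2 * s)) a := Real.hasDerivAt_sqrt ha.ne'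
  have hinv : HasDerivAt (fun b => (Real.sqrt b)⁻¹) (-(1 / (2 * s)) / s ^ 2) a :=
    hsqrt.inv hs.ne'
  have hinner : HasDerivAt (fun b => (y - x) / Real.sqrt b)
      ((y - x) * (-(1 / (2 * s)) / s ^ 2)) a := by
    simpa [div_eq_mul_inv] using hinv.const_mul (y - x)
  have hcomp : HasDerivAt (fun b => fW ((y - x) / Real.sqrt b))
      (deriv fW u * ((y - x) * (-(1 / (2 * s)) / s ^ 2))) a := by
    have := hfu.comp a hinner
    simpa [Function.comp_def, hu] using this
  have hb : HasDerivAt (fun b => (Real.sqrt b)⁻¹ * fW ((y - x) / Real.sqrt b))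
      (-(1 / (2 * s)) / s ^ 2 * fW u + s⁻¹ * (deriv fW u * ((y - x) * (-(1 / (2 * s)) / s ^ 2)))) a := by
    simpa [Pi.mul_def, hu, ← hsdef] using hinv.mul hcomp
  have hbp : HasDerivAt (fun b => p y x b)
      (-(1 / (2 * s)) / s ^ 2 * fW u + s⁻¹ * (deriv fW u * ((y - x) * (-(1 / (2 * s)) / s ^ 2)))) a := by
    have heq : (fun b => p y x b) = fun b => (Real.sqrt b)⁻¹ * fW ((y - x) / Real.sqrt b) :=
      funext fun b => hp y x b
    rw [heq]; exact hb
  -- derivative in y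
  have hy1 : HasDerivAt (fun y' : ℝ => (y' - x) / s) s⁻¹ y := by
    simpa [div_eq_mul_inv] using ((hasDerivAt_id y).sub_const x).mul_const s⁻¹
  have hy2 : HasDerivAt (fun y' => fW ((y' - x) / s)) (deriv fW u * s⁻¹) y := by
    have := hfu.comp y hy1
    simpa [Function.comp_def, hu] using this
  have hy3 : HasDerivAt (fun y' => (y' - x) * (s⁻¹ * fW ((y' - x) / s)))
      (1 * (s⁻¹ * fW u) + (y - x) * (s⁻¹ * (deriv fW u * s⁻¹))) y := by
    have := ((hasDerivAt_id y).sub_const x).mul (hy2.const_mul s⁻¹)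
    simpa [Pi.mul_def, hu] using this
  have hyp : HasDerivAt (fun y' => (y' - x) * p y' x a)
      (1 * (s⁻¹ * fW u) + (y - x) * (s⁻¹ * (deriv fW u * s⁻¹))) y := by
    have heq : (fun y' => (y' - x) * p y' x a)
        = fun y' => (y' - x) * (s⁻¹ * fW ((y' - x) / s)) :=
      funext fun y' => by rw [hp y' x a]
    rw [heq]; exact hy3
  rw [hbp.deriv, hyp.deriv]
  have ha' : a ≠ 0 := ha.ne'
  have hs' : s ≠ 0 := hs.ne'
  rw [← hs2]
  field_simp
  ring
end
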